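/- arXiv:2105.06313 — 5 statements merged into one kernel-verified Lean document; each statement's English description precedes it below -/
import Mathlib

section
/- Suppose the message function f satisfies the sure thing principle. If at some state x the profile of messages sent, i.e., the event E(x) = {x' : f_i(x') = f_i(x) for all i}, is common knowledge at every state x, then all agents send the same messages: f_i = f_j for all i, j. -/
/-- The block of the partition (setoid) `P` containing `x`. -/
def blk {X : Type*} (P : Setoid X) (x : X) : Set X := {y | P.r x y}

/-- The message sent at state `x` by an agent with information `P`,
given the message function `f`. -/
def msg {X A : Type*} (f : Set X → A) (P : Setoid X) (x : X) : A := f (blk P x)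

/-- The working partition of `P` induced by the message function `f`:
two states are equivalent iff the same message is sent at them. -/
def wp {X A : Type*} (f : Set X → A) (P : Setoid X) : Setoid X := Setoid.ker (msg f P)

/-- The sure thing principle: for any nonempty `S` and any partition of `S`
into nonempty blocks all mapped by `f` to `a`, `f S = a`. -/
def STPred {X A : Type*} (f : Set X → A) : Prop :=
  ∀ (S : Set X) (C : Set (Set X)) (a : A), S.Nonempty →
    (∀ B ∈ C, B.Nonempty) → C.PairwiseDisjoint id → ⋃₀ C = S →
    (∀ B ∈ C, f B = a) → f S = a

open scoped Classical in
/- The update function on profiles of partitions induced by the graph `G`: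
if `i` has senders, `i` refines her partition by joining (in the refinement
order: `⊓` in the `Setoid` order, which is the coarsest common refinement)
with the working partitions of all her senders; else her partition stays put.
Note: in the `Setoid` order, smaller = finer, so the paper's coarsening order
`P ≤ Q` ("Q refines P") is `Q ≤ P` here, the paper's join is `⊓`, and the
paper's meet is `⊔`. -/
noncomputable def update {X A I : Type*} (f : Set X → A) (G : I → I → Prop)
    (P : I → Setoid X) (i : I) : Setoid X :=
  if (∃ j, G j i) then ⨅ j ∈ {j | G j i}, (P i ⊓ wp f (P j)) else P i

/-- Under the sure thing principle, if at every state `x` the profile of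
messages sent (the event `E(x)`) is common knowledge at `x`, then all agents send the
same messages: `fᵢ = fⱼ` for all `i, j`. -/
theorem stmt_3 {X A I : Type*} [Fintype I] [Nonempty I] (f : Set X → A)
    (hstp : STPred f) (P : I → Setoid X)
    (hck : ∀ x : X, blk (⨆ i, P i) x ⊆ {x' | ∀ i, msg f (P i) x' = msg f (P i) x}) :
    ∀ i j, msg f (P i) = msg f (P j) := by
  have key : ∀ (x : X) (i : I), msg f (P i) x = f (blk (⨆ k, P k) x) := by
    intro x i
    set Q := ⨆ k, P k with hQ
    set M := blk Q x with hM
    have hMne : M.Nonempty := ⟨x, Q.refl x⟩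
    have hle : P i ≤ Q := le_iSup P i
    have hsub : ∀ y ∈ M, blk (P i) y ⊆ M := by
      intro y hy z hz
      exact Q.trans hy (hle hz)
    have hres := hstp M ((blk (P i)) '' M) (msg f (P i) x) hMne
      (by rintro B ⟨y, hy, rfl⟩; exact ⟨y, (P i).refl y⟩)
      (by
        rintro B ⟨y1, hy1, rfl⟩ B2 ⟨y2, hy2, rfl⟩ hne
        refine Set.disjoint_left.2 fun z hz1 hz2 => hne ?_
        have hrel : (P i).r y1 y2 := (P i).trans hz1 ((P i).symm hz2)
        ext w
        exact ⟨fun h => (P i).trans ((P i).symm hrel) h,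
               fun h => (P i).trans hrel h⟩)
      (by
        apply Set.Subset.antisymm
        · rintro z ⟨B, ⟨y, hy, rfl⟩, hz⟩
          exact hsub y hy hz
        · intro y hy
          exact ⟨blk (P i) y, ⟨y, hy, rfl⟩, (P i).refl y⟩)
      (by
        rintro B ⟨y, hy, rfl⟩
        exact (hck x hy) i)
    exact hres.symm
  intro i j
  funext x
  rw [key x i, key x j]
end

section
/- If the message function f satisfies the sure thing principle and two agents i, j with partitions P_i, P_j have different message functions (f_i ≠ f_j), then P_i is strictly coarser than P_i ∨ W_j, or P_j is strictly coarser than P_j ∨ W_i, where W_i, W_j are the respective working partitions and ∨ denotes the join (coarsest common refinement). -/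
lemma le_wp_self {X A : Type*} (f : Set X → A) (P : Setoid X) : P ≤ wp f P := by
  intro x y h
  show msg f P x = msg f P y
  unfold msg blk
  congr 1
  ext z
  exact ⟨fun hz => P.trans (P.symm h) hz, fun hz => P.trans h hz⟩

lemma f_blk_of_le {X A : Type*} (f : Set X → A) (hstp : STPred f)
    (P Q : Setoid X) (hPQ : P ≤ Q) (hW : Q ≤ wp f P) (x : X) :
    f (blk Q x) = msg f P x := by
  apply hstp (blk Q x) {B | ∃ y, Q.r x y ∧ B = blk P y} (msg f P x)
  · exact ⟨x, Q.refl x⟩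
  · rintro B ⟨y, -, rfl⟩; exact ⟨y, P.refl y⟩
  · rintro B ⟨y, -, rfl⟩ B' ⟨y', -, rfl⟩ hne'
    refine Set.disjoint_left.2 fun z hz hz' => hne' ?_
    have hyy' : P.r y y' := P.trans hz (P.symm hz')
    show blk P y = blk P y'
    ext w
    exact ⟨fun hw => P.trans (P.symm hyy') hw, fun hw => P.trans hyy' hw⟩
  · ext z
    constructor
    · rintro ⟨B, ⟨y, hy, rfl⟩, hz⟩
      exact Q.trans hy (hPQ hz)
    · intro hz
      exact ⟨blk P z, ⟨z, hz, rfl⟩, P.refl z⟩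
  · rintro B ⟨y, hy, rfl⟩
    exact (hW hy).symm

/-- Under the STP, if two agents' message functions differ, then `Pᵢ`
is strictly coarser than `Pᵢ ∨ Wⱼ` or `Pⱼ` is strictly coarser than `Pⱼ ∨ Wᵢ`.
(The paper's join — coarsest common refinement — is `⊓` in the `Setoid` order, and
"strictly coarser" in the paper order is `<` reversed here.) -/
theorem stmt_4 {X A : Type*} (f : Set X → A) (hstp : STPred f)
    (Pi Pj : Setoid X) (hne : msg f Pi ≠ msg f Pj) :
    Pi ⊓ wp f Pj < Pi ∨ Pj ⊓ wp f Pi < Pj := by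
  by_contra hcon
  push_neg at hcon
  obtain ⟨h1, h2⟩ := hcon
  have e1 : Pi ⊓ wp f Pj = Pi := by
    by_contra h; exact h1 (lt_of_le_of_ne inf_le_left h)
  have e2 : Pj ⊓ wp f Pi = Pj := by
    by_contra h; exact h2 (lt_of_le_of_ne inf_le_left h)
  have hi : Pi ≤ wp f Pj := e1 ▸ inf_le_right
  have hj : Pj ≤ wp f Pi := e2 ▸ inf_le_right
  apply hne
  funext x
  have hQi : Pi ⊔ Pj ≤ wp f Pi := sup_le (le_wp_self f Pi) hj
  have hQj : Pi ⊔ Pj ≤ wp f Pj := sup_le hi (le_wp_self f Pj)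
  have ha := f_blk_of_le f hstp Pi (Pi ⊔ Pj) le_sup_left hQi x
  have hb := f_blk_of_le f hstp Pj (Pi ⊔ Pj) le_sup_right hQj x
  exact ha.symm.trans hb
end

section
/- There exist a four-element state space X, a message function f, and a two-agent communication graph such that the update function g is not monotone: there exist profiles P ≤ P' of partition pairs with g(P) not ≤ g(P'). -/
/-- The partition `{{0,1},{2,3}}` of `Fin 4`. -/
def myQ : Setoid (Fin 4) := Setoid.ker (fun x : Fin 4 => decide (x.val < 2))

/-- The message function: `True` on `{0}` and `{0,1}`, `False` elsewhere. -/
def myf : Set (Fin 4) → Prop := fun S => S = {0} ∨ S = {0,1}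

lemma blk_bot (x : Fin 4) : blk (⊥ : Setoid (Fin 4)) x = {x} := by
  ext y; simp [blk, eq_comm]

lemma blkQ1 : blk myQ 1 = {0,1} := by
  ext y; fin_cases y <;> unfold blk myQ <;> simp [Setoid.ker_def]

lemma blkQ2 : blk myQ 2 = {2,3} := by
  ext y; fin_cases y <;> unfold blk myQ <;> simp [Setoid.ker_def]

lemma iInf_ne_zero (F : Fin 2 → Setoid (Fin 4)) : ⨅ j ∈ {j : Fin 2 | j ≠ 0}, F j = F 1 := by
  have h : {j : Fin 2 | j ≠ 0} = {1} := by ext j; fin_cases j <;> simp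
  rw [h, iInf_singleton]

/-- On a four-element state space with two agents, the update function `g`
need not be monotone: there exist profiles with `P ≤ P'` in the componentwise
coarsening order (i.e. `P' i ≤ P i` in the `Setoid` order) but `g(P) ≰ g(P')`. -/
theorem stmt_7 :
    ∃ (A : Type) (f : Set (Fin 4) → A) (G : Fin 2 → Fin 2 → Prop)
      (P P' : Fin 2 → Setoid (Fin 4)),
      (∀ i, P' i ≤ P i) ∧ ¬ (∀ i, update f G P' i ≤ update f G P i) := by
  refine ⟨Prop, myf, fun j i => j ≠ i, ![⊤, myQ], ![⊤, ⊥], ?_, ?_⟩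
  · intro i; fin_cases i
    · exact le_refl _
    · exact bot_le
  · intro h
    have h0 := h 0
    have hex : ∃ j : Fin 2, j ≠ 0 := ⟨1, by decide⟩
    have e1 : update myf (fun j i => j ≠ i) ![⊤, myQ] 0 = ⊤ ⊓ wp myf myQ := by
      simp only [update, if_pos hex]
      exact iInf_ne_zero _
    have e2 : update myf (fun j i => j ≠ i) ![⊤, ⊥] 0 = ⊤ ⊓ wp myf (⊥ : Setoid (Fin 4)) := by
      simp only [update, if_pos hex]
      exact iInf_ne_zero _
    rw [e1, e2, top_inf_eq, top_inf_eq] at h0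
    -- h0 : wp myf ⊥ ≤ wp myf myQ
    have hrel : (wp myf (⊥ : Setoid (Fin 4))).r 1 2 := by
      show msg myf ⊥ 1 = msg myf ⊥ 2
      simp only [msg, blk_bot]
      have h1 : myf {1} = False := by
        simp only [myf, eq_iff_iff, iff_false]
        rintro (h | h)
        · have := Set.ext_iff.mp h 1; simp at this
        · have := Set.ext_iff.mp h 0; simp at this
      have h2 : myf {2} = False := by
        simp only [myf, eq_iff_iff, iff_false]
        rintro (h | h)
        · have := Set.ext_iff.mp h 2; simp at this
        · have := Set.ext_iff.mp h 2; simp at this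
      rw [h1, h2]
    have h2 := h0 hrel
    -- h2 : (wp myf myQ).Rel 1 2
    have : msg myf myQ 1 = msg myf myQ 2 := h2
    simp only [msg, blkQ1, blkQ2] at this
    have ht : myf {0,1} := Or.inr rfl
    rw [this] at ht
    rcases ht with h | h
    · have := Set.ext_iff.mp h 3; simp at this
    · have := Set.ext_iff.mp h 3; simp at this
end

section
/- There exists a two-state example showing that common knowledge of the profile of messages at every state does not imply agreement when the STP fails: with X = {x,y}, f({x}) = f({y}) = a, f({x,y}) = b, P_1 the discrete partition and P_2 the trivial partition, the event of messages sent is common knowledge at every state, yet f_1 ≠ f_2, and moreover W_1 = W_2 = {X}. -/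
lemma hblkbot (x : Bool) : blk (⊥ : Setoid Bool) x = {x} := by
  ext y
  show (⊥ : Setoid Bool).r x y ↔ y ∈ ({x} : Set Bool)
  rw [show (⊥ : Setoid Bool).r = (· = ·) from Setoid.bot_def]
  simp [eq_comm]

lemma hblktop (x : Bool) : blk (⊤ : Setoid Bool) x = Set.univ := by
  ext y
  show (⊤ : Setoid Bool).r x y ↔ True
  rw [show (⊤ : Setoid Bool).r = fun _ _ => True from Setoid.top_def]

lemma hsingle (x : Bool) : ({x} : Set Bool) ≠ Set.univ := fun h => by
  have h2 : (!x) ∈ ({x} : Set Bool) := h ▸ Set.mem_univ (!x)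
  simp at h2

/-- A two-state example where the STP fails: the profile of messages is
common knowledge at every state, yet the agents' message functions differ, and both
working partitions are trivial. Here `P₁ = ⊥` is the discrete partition, `P₂ = ⊤` the
trivial one, and the paper's meet of partitions is `⊔` in the `Setoid` order. -/
theorem stmt_14 :
    ∃ (f : Set Bool → Bool) (a b : Bool), a ≠ b ∧
      f {false} = a ∧ f {true} = a ∧ f Set.univ = b ∧
      (∀ x, blk ((⊥ : Setoid Bool) ⊔ (⊤ : Setoid Bool)) x ⊆
        {x' | msg f (⊥ : Setoid Bool) x' = msg f (⊥ : Setoid Bool) x ∧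
              msg f (⊤ : Setoid Bool) x' = msg f (⊤ : Setoid Bool) x}) ∧
      msg f (⊥ : Setoid Bool) ≠ msg f (⊤ : Setoid Bool) ∧
      wp f (⊥ : Setoid Bool) = ⊤ ∧ wp f (⊤ : Setoid Bool) = ⊤ := by
  classical
  set f : Set Bool → Bool := fun S => decide (S = Set.univ) with hf
  have hmb : ∀ x, msg f (⊥ : Setoid Bool) x = false := fun x => by
    rw [msg, hblkbot, hf]; exact decide_eq_false (hsingle x)
  have hmt : ∀ x, msg f (⊤ : Setoid Bool) x = true := fun x => by
    rw [msg, hblktop, hf]; exact decide_eq_true rfl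
  refine ⟨f, false, true, by simp, decide_eq_false (hsingle false),
    decide_eq_false (hsingle true), decide_eq_true rfl, ?_, ?_, ?_, ?_⟩
  · intro x x' _
    exact ⟨by rw [hmb, hmb], by rw [hmt, hmt]⟩
  · intro h
    have := congrFun h true
    rw [hmb, hmt] at this; exact Bool.false_ne_true this
  · apply Setoid.ext; intro x y
    show msg f ⊥ x = msg f ⊥ y ↔ (⊤ : Setoid Bool).r x y
    rw [hmb, hmb, show (⊤ : Setoid Bool).r = fun _ _ => True from Setoid.top_def]
    simp
  · apply Setoid.ext; intro x y
    show msg f ⊤ x = msg f ⊤ y ↔ (⊤ : Setoid Bool).r x y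
    rw [hmt, hmt, show (⊤ : Setoid Bool).r = fun _ _ => True from Setoid.top_def]
    simp
end

section
/- Expected-value maximization satisfies the sure thing principle: if X is a probability space, D a finite action set, u : D × X → ℝ bounded measurable, and f(S) is an action maximizing conditional expected utility E[u(d,·) | S] (with a fixed tie-breaking rule given by a linear order on D), then for any countable measurable partition {S_h} of S with all f(S_h) = a, one has f(S) = a. -/
open MeasureTheory

/-- Expected-value maximization (with a fixed linear-order tie-breaking
rule) satisfies the sure thing principle: if `f S` is the least maximizer of the
conditional expected utility on `S`, and `{c h}` is a countable measurable partition
of `S` into sets of positive measure with `f (c h) = a` for all `h`, then `f S = a`. -/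
theorem stmt_17 {X : Type*} [MeasurableSpace X] (μ : Measure X)
    [IsProbabilityMeasure μ] {D : Type*} [Fintype D] [LinearOrder D]
    (u : D → X → ℝ) (hmeas : ∀ d, Measurable (u d))
    (C : ℝ) (hbd : ∀ d x, |u d x| ≤ C)
    (f : Set X → D)
    (hf : ∀ S : Set X, MeasurableSet S → 0 < μ S →
      IsLeast {d : D | ∀ d' : D,
        (∫ x in S, u d' x ∂μ) / (μ S).toReal ≤ (∫ x in S, u d x ∂μ) / (μ S).toReal}
        (f S))
    (S : Set X) (hS : MeasurableSet S) (hSpos : 0 < μ S)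
    {H : Type*} [Countable H] (c : H → Set X)
    (hcm : ∀ h, MeasurableSet (c h)) (hcpos : ∀ h, 0 < μ (c h))
    (hdisj : Pairwise (Function.onFun Disjoint c)) (hunion : ⋃ h, c h = S)
    (a : D) (ha : ∀ h, f (c h) = a) : f S = a := by
  -- integrability
  have hint : ∀ d, Integrable (u d) μ := fun d =>
    ⟨(hmeas d).aestronglyMeasurable,
      HasFiniteIntegral.of_bounded (C := C) (ae_of_all μ fun x => by
        simpa [Real.norm_eq_abs] using hbd d x)⟩
  -- translate the division condition into plain integral comparison
  have hdiv : ∀ (T : Set X), 0 < μ T → ∀ d d' : D,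
      ((∫ x in T, u d' x ∂μ) / (μ T).toReal ≤ (∫ x in T, u d x ∂μ) / (μ T).toReal ↔
        (∫ x in T, u d' x ∂μ) ≤ (∫ x in T, u d x ∂μ)) := by
    intro T hT d d'
    have hpos : 0 < (μ T).toReal :=
      ENNReal.toReal_pos hT.ne' (measure_ne_top μ T)
    exact div_le_div_iff_of_pos_right hpos
  -- HasSum of the set integrals
  have Hs : ∀ d : D, HasSum (fun h => ∫ x in c h, u d x ∂μ) (∫ x in S, u d x ∂μ) := by
    intro d
    have := hasSum_integral_iUnion (μ := μ) hcm hdisj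
      ((hint d).integrableOn (s := ⋃ h, c h))
    rwa [hunion] at this
  -- `a` maximizes on each block
  have hA : ∀ h, ∀ d' : D, (∫ x in c h, u d' x ∂μ) ≤ (∫ x in c h, u a x ∂μ) := by
    intro h d'
    have := (hf (c h) (hcm h) (hcpos h)).1 d'
    rw [ha h] at this
    exact (hdiv (c h) (hcpos h) a d').mp this
  -- `a` is the least maximizer on each block
  have hL : ∀ h, ∀ d : D,
      (∀ d' : D, (∫ x in c h, u d' x ∂μ) ≤ (∫ x in c h, u d x ∂μ)) → a ≤ d := by
    intro h d hd
    have := (hf (c h) (hcm h) (hcpos h)).2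
      (fun d' => (hdiv (c h) (hcpos h) d d').mpr (hd d'))
    rwa [ha h] at this
  -- `a` maximizes on `S`
  have hAmax : ∀ d' : D, (∫ x in S, u d' x ∂μ) ≤ (∫ x in S, u a x ∂μ) := by
    intro d'
    exact hasSum_le (fun h => hA h d') (Hs d') (Hs a)
  -- hence `f S ≤ a`
  have h1 : f S ≤ a := (hf S hS hSpos).2
    (fun d' => (hdiv S hSpos a d').mpr (hAmax d'))
  -- `f S` maximizes on `S`
  have hFmax : ∀ d' : D, (∫ x in S, u d' x ∂μ) ≤ (∫ x in S, u (f S) x ∂μ) := by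
    intro d'
    exact (hdiv S hSpos (f S) d').mp ((hf S hS hSpos).1 d')
  have heq : (∫ x in S, u (f S) x ∂μ) = (∫ x in S, u a x ∂μ) :=
    le_antisymm (hAmax (f S)) (hFmax a)
  -- blockwise equality of integrals of `u (f S)` and `u a`
  have hblock : ∀ h, (∫ x in c h, u (f S) x ∂μ) = (∫ x in c h, u a x ∂μ) := by
    intro h
    by_contra hne
    have hlt : (∫ x in c h, u (f S) x ∂μ) < (∫ x in c h, u a x ∂μ) :=
      lt_of_le_of_ne (hA h (f S)) hne
    have : (∫ x in S, u (f S) x ∂μ) < (∫ x in S, u a x ∂μ) := by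
      rw [← (Hs (f S)).tsum_eq, ← (Hs a).tsum_eq]
      exact Summable.tsum_lt_tsum (fun h' => hA h' (f S)) hlt (Hs (f S)).summable (Hs a).summable
    exact absurd heq this.ne
  -- `f S` maximizes on each block, so `a ≤ f S`
  have h2 : a ≤ f S := by
    rcases isEmpty_or_nonempty H with hH | hH
    · exfalso
      have : μ S = 0 := by rw [← hunion]; simp
      exact hSpos.ne' this
    · obtain ⟨h⟩ := hH
      exact hL h (f S) (fun d' => (hA h d').trans_eq (hblock h).symm)
  exact le_antisymm h1 h2
end
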